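/- Let N ≥ 2 and α ∈ (0,1). Then the function ν : (0,∞) → ℝ is differentiable and ν′(R) > 0 for every R > 0; in particular ν is strictly increasing on (0,∞). -/

import Mathlib

open MeasureTheory Real Filter Topology

noncomputable section
abbrev ES (m : ℕ) : Type := EuclideanSpace ℝ (Fin (m + 1))

/-- The eigenvalue function
`ν(R) = 2R^{1+α} (∫ (1-cos t₁)/|t|^{N+α} dt - ∫ (1+cos t₁)/(|t|²+4R²)^{(N+α)/2} dt)`,
with `N = m + 2`. -/
def nu (m : ℕ) (α : ℝ) (R : ℝ) : ℝ :=
  2 * R ^ (1 + α) *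
    ((∫ t : ES m, (1 - Real.cos (t 0)) / ‖t‖ ^ ((m : ℝ) + 2 + α)) -
      ∫ t : ES m, (1 + Real.cos (t 0)) / (‖t‖ ^ 2 + 4 * R ^ 2) ^ (((m : ℝ) + 2 + α) / 2))

namespace Stmt8

def pe (m : ℕ) (α : ℝ) : ℝ := ((m : ℝ) + 2 + α) / 2

def w (m : ℕ) (α : ℝ) (s : ES m) : ℝ := (1 + ‖s‖ ^ 2) ^ (-(pe m α))

lemma one_lt_pe {m : ℕ} {α : ℝ} (hα : 0 < α) : 1 < pe m α := by
  have : (0:ℝ) ≤ (m:ℝ) := Nat.cast_nonneg m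
  unfold pe; linarith

lemma cont0 {m : ℕ} : Continuous fun s : ES m => s 0 :=
  (EuclideanSpace.proj (0 : Fin (m+1)) : ES m →L[ℝ] ℝ).continuous

lemma w_cont {m : ℕ} {α : ℝ} : Continuous (w m α) := by
  apply Continuous.rpow_const (by continuity)
  intro s; left; positivity

lemma w_nonneg {m : ℕ} {α : ℝ} (s : ES m) : 0 ≤ w m α s := by
  unfold w; positivity

lemma abs_coord_le_norm {m : ℕ} (s : ES m) : |s 0| ≤ ‖s‖ := by
  have h := abs_real_inner_le_norm (EuclideanSpace.single (0 : Fin (m+1)) (1:ℝ)) s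
  rw [EuclideanSpace.inner_single_left] at h
  simpa [EuclideanSpace.norm_single] using h

lemma w_int {m : ℕ} {α : ℝ} (hα : 0 < α) : Integrable (w m α) := by
  have h := integrable_rpow_neg_one_add_norm_sq (E := ES m) (μ := volume)
    (r := 2 * pe m α) (by
      rw [finrank_euclideanSpace_fin]; unfold pe; push_cast; linarith)
  have : ∀ s : ES m, ((1:ℝ) + ‖s‖ ^ 2) ^ (-(2 * pe m α) / 2) = w m α s := by
    intro s; unfold w; congr 1; ring
  exact h.congr (ae_of_all _ this)

lemma w1_int {m : ℕ} {α : ℝ} (hα : 0 < α) : Integrable (fun s : ES m => |s 0| * w m α s) := by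
  have h := integrable_rpow_neg_one_add_norm_sq (E := ES m) (μ := volume)
    (r := 2 * pe m α - 1) (by
      rw [finrank_euclideanSpace_fin]; unfold pe; push_cast; linarith)
  refine h.mono' ((cont0.abs.mul w_cont).aestronglyMeasurable) (ae_of_all _ fun s => ?_)
  have h0 : (0:ℝ) < 1 + ‖s‖ ^ 2 := by positivity
  have h1 : |s 0| ≤ (1 + ‖s‖ ^ 2) ^ ((1:ℝ)/2) := by
    rw [← Real.sqrt_eq_rpow]
    exact le_trans (abs_coord_le_norm s)
      (Real.le_sqrt_of_sq_le (by nlinarith [norm_nonneg s]))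
  have : |s 0| * w m α s ≤ (1 + ‖s‖ ^ 2) ^ ((1:ℝ)/2) * (1 + ‖s‖ ^ 2) ^ (-(pe m α)) :=
    mul_le_mul_of_nonneg_right h1 (by unfold w at *; positivity)
  rw [norm_of_nonneg (mul_nonneg (abs_nonneg _) (w_nonneg s))]
  refine this.trans ?_
  rw [← Real.rpow_add h0]
  apply le_of_eq; congr 1; ring

lemma gauss_int {m : ℕ} {t : ℝ} (ht : 0 < t) :
    Integrable (fun v : ES m => rexp (-t * ‖v‖ ^ 2)) := by
  have h := GaussianFourier.integrable_cexp_neg_mul_sq_norm_add_of_euclideanSpace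
    (ι := Fin (m+1)) (b := (t:ℂ)) (by simpa using ht) 0 0
  have h2 := h.norm
  refine h2.congr (ae_of_all _ fun v => ?_)
  simp [Complex.norm_exp]
  exact Or.inl (by norm_cast)

lemma mul_exp_neg_sq_le {τ : ℝ} (hτ : 0 < τ) {r : ℝ} (hr : 0 ≤ r) :
    r * rexp (-τ * r ^ 2) ≤ 1 + τ⁻¹ := by
  rcases le_or_gt r 1 with h | h
  · have : rexp (-τ * r ^ 2) ≤ 1 := by
      rw [Real.exp_le_one_iff]; nlinarith
    nlinarith [Real.exp_pos (-τ * r ^ 2), inv_nonneg.mpr hτ.le]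
  · have h1 : τ * r ^ 2 ≤ rexp (τ * r ^ 2) := by
      nlinarith [Real.add_one_le_exp (τ * r ^ 2)]
    have h2 : r ≤ r ^ 2 := by nlinarith
    have h3 : r * rexp (-τ * r ^ 2) ≤ τ⁻¹ := by
      have h4 : r * τ ≤ rexp (τ * r ^ 2) := by
        nlinarith [mul_nonneg (by nlinarith : (0:ℝ) ≤ r ^ 2 - r) hτ.le]
      rw [show -τ * r ^ 2 = -(τ * r ^ 2) by ring, Real.exp_neg]
      calc r * (rexp (τ * r ^ 2))⁻¹
          ≤ (rexp (τ * r ^ 2) / τ) * (rexp (τ * r ^ 2))⁻¹ := by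
            apply mul_le_mul_of_nonneg_right _ (by positivity)
            rw [le_div_iff₀ hτ]; linarith
        _ = τ⁻¹ := by field_simp
    linarith

lemma gauss1_int {m : ℕ} {t : ℝ} (ht : 0 < t) :
    Integrable (fun v : ES m => |v 0| * rexp (-t * ‖v‖ ^ 2)) := by
  have h2 : (0:ℝ) < t/2 := by linarith
  refine ((gauss_int (m := m) h2).const_mul (1 + (t/2)⁻¹)).mono'
    ((cont0.abs.mul (by continuity)).aestronglyMeasurable) (ae_of_all _ fun v => ?_)
  have hb : |v 0| ≤ ‖v‖ := abs_coord_le_norm v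
  rw [norm_of_nonneg (by positivity)]
  have key : ‖v‖ * rexp (-(t/2) * ‖v‖ ^ 2) ≤ 1 + (t/2)⁻¹ :=
    mul_exp_neg_sq_le h2 (norm_nonneg v)
  have : rexp (-t * ‖v‖ ^ 2) = rexp (-(t/2) * ‖v‖ ^ 2) * rexp (-(t/2) * ‖v‖ ^ 2) := by
    rw [← Real.exp_add]; ring_nf
  calc |v 0| * rexp (-t * ‖v‖ ^ 2)
      ≤ ‖v‖ * rexp (-t * ‖v‖ ^ 2) := mul_le_mul_of_nonneg_right hb (by positivity)
    _ = (‖v‖ * rexp (-(t/2) * ‖v‖ ^ 2)) * rexp (-(t/2) * ‖v‖ ^ 2) := by rw [this]; ring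
    _ ≤ (1 + (t/2)⁻¹) * rexp (-(t/2) * ‖v‖ ^ 2) :=
        mul_le_mul_of_nonneg_right key (by positivity)

lemma cos_gauss (m : ℕ) {t : ℝ} (ht : 0 < t) (ξ : ℝ) :
    ∫ v : ES m, Real.cos (ξ * v 0) * rexp (-t * ‖v‖ ^ 2)
      = (π/t) ^ (((m:ℝ)+1)/2) * rexp (-ξ^2/(4*t)) := by
  have hbre : 0 < (t:ℂ).re := by simpa using ht
  have key := GaussianFourier.integral_cexp_neg_mul_sq_norm_add_of_euclideanSpace
    (ι := Fin (m+1)) (b := (t:ℂ)) hbre ((ξ:ℂ) * Complex.I)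
    (EuclideanSpace.single (0 : Fin (m+1)) (1:ℝ))
  have hint := GaussianFourier.integrable_cexp_neg_mul_sq_norm_add_of_euclideanSpace
    (ι := Fin (m+1)) (b := (t:ℂ)) hbre ((ξ:ℂ) * Complex.I)
    (EuclideanSpace.single (0 : Fin (m+1)) (1:ℝ))
  have hre := congrArg Complex.re key
  have h3 := integral_re hint
  simp only [RCLike.re_to_complex] at h3
  rw [← h3] at hre
  have hL : ∀ v : ES m,
      (Complex.exp (-(t:ℂ) * (‖v‖:ℂ) ^ 2 + ((ξ:ℂ) * Complex.I) *
        ((inner ℝ (EuclideanSpace.single (0 : Fin (m+1)) (1:ℝ)) v : ℝ) : ℂ))).re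
      = Real.cos (ξ * v 0) * rexp (-t * ‖v‖ ^ 2) := by
    intro v
    rw [Complex.exp_re]
    have h1 : (-(t:ℂ) * (‖v‖:ℂ) ^ 2 + ((ξ:ℂ) * Complex.I) *
        ((inner ℝ (EuclideanSpace.single (0 : Fin (m+1)) (1:ℝ)) v : ℝ) : ℂ)).re
        = -t * ‖v‖ ^ 2 := by
      simp [← Complex.ofReal_pow]
    have h2 : (-(t:ℂ) * (‖v‖:ℂ) ^ 2 + ((ξ:ℂ) * Complex.I) *
        ((inner ℝ (EuclideanSpace.single (0 : Fin (m+1)) (1:ℝ)) v : ℝ) : ℂ)).im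
        = ξ * v 0 := by
      have : (inner ℝ (EuclideanSpace.single (0 : Fin (m+1)) (1:ℝ)) v : ℝ) = v 0 := by
        rw [EuclideanSpace.inner_single_left]; simp
      simp [this, ← Complex.ofReal_pow]
    rw [h1, h2]; ring
  have hns : ‖EuclideanSpace.single (0:Fin (m+1)) (1:ℝ)‖ = 1 := by
    rw [EuclideanSpace.norm_single]; simp
  have e1 : ((π:ℂ) / (t:ℂ)) ^ ((Fintype.card (Fin (m+1)) : ℂ) / 2)
      = (((π/t) ^ (((m:ℝ)+1)/2) : ℝ) : ℂ) := by
    rw [Complex.ofReal_cpow (by positivity)]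
    push_cast
    norm_num
  have e2 : (((ξ:ℂ) * Complex.I) ^ 2 *
      ((‖EuclideanSpace.single (0:Fin (m+1)) (1:ℝ)‖ : ℝ) : ℂ) ^ 2 / (4 * (t:ℂ)))
      = ((-ξ^2/(4*t) : ℝ) : ℂ) := by
    rw [hns]
    rw [mul_pow, Complex.I_sq]
    push_cast
    ring
  rw [e1, e2, ← Complex.ofReal_exp, ← Complex.ofReal_mul] at hre
  simp only [Complex.ofReal_re] at hre
  rw [← hre]
  exact integral_congr_ae (ae_of_all _ fun v => (hL v).symm)



lemma Psi_eq (m : ℕ) {t : ℝ} (ht : 0 < t) (x : ℝ) :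
    ∫ v : ES m, (v 0) * Real.sin (x * v 0) * rexp (-t * ‖v‖ ^ 2)
      = (π/t) ^ (((m:ℝ)+1)/2) * (x/(2*t)) * rexp (-x^2/(4*t)) := by
  set K : ℝ := (π/t) ^ (((m:ℝ)+1)/2) with hK
  have hcont : ∀ ξ : ℝ, Continuous fun v : ES m => Real.cos (ξ * v 0) * rexp (-t * ‖v‖ ^ 2) := by
    intro ξ
    exact (Real.continuous_cos.comp (continuous_const.mul cont0)).mul (by continuity)
  have hder := (hasDerivAt_integral_of_dominated_loc_of_deriv_le
      (μ := (volume : Measure (ES m)))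
      (F := fun (ξ : ℝ) (v : ES m) => Real.cos (ξ * v 0) * rexp (-t * ‖v‖ ^ 2))
      (F' := fun (ξ : ℝ) (v : ES m) => -((v 0) * Real.sin (ξ * v 0) * rexp (-t * ‖v‖ ^ 2)))
      (bound := fun v : ES m => |v 0| * rexp (-t * ‖v‖ ^ 2))
      (x₀ := x) (Metric.ball_mem_nhds x one_pos)
      (Eventually.of_forall fun ξ => (hcont ξ).aestronglyMeasurable)
      ((gauss_int ht).mono' (hcont x).aestronglyMeasurable (ae_of_all _ fun v => by
        rw [norm_mul, Real.norm_eq_abs, Real.norm_eq_abs, abs_of_pos (Real.exp_pos _)]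
        exact mul_le_of_le_one_left (Real.exp_pos _).le (Real.abs_cos_le_one _)))
      (by
        apply Continuous.aestronglyMeasurable
        exact ((cont0.mul (Real.continuous_sin.comp (continuous_const.mul cont0))).mul
          (by continuity)).neg)
      (ae_of_all _ fun v => by
        intro ξ _
        rw [norm_neg, norm_mul, norm_mul, Real.norm_eq_abs, Real.norm_eq_abs,
          Real.norm_eq_abs, abs_of_pos (Real.exp_pos _)]
        have : |v 0| * |Real.sin (ξ * v 0)| ≤ |v 0| * 1 :=
          mul_le_mul_of_nonneg_left (Real.abs_sin_le_one _) (abs_nonneg _)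
        have h2 : |v 0| * |Real.sin (ξ * v 0)| ≤ |v 0| := by linarith
        exact mul_le_mul_of_nonneg_right h2 (Real.exp_pos _).le)
      (gauss1_int ht)
      (ae_of_all _ fun v => by
        intro ξ _
        have h1 : HasDerivAt (fun ξ : ℝ => ξ * v 0) (v 0) ξ := hasDerivAt_mul_const _
        have h2 := ((Real.hasDerivAt_cos (ξ * v 0)).comp ξ h1).mul_const
          (rexp (-t * ‖v‖ ^ 2))
        exact h2.congr_deriv (by ring))).2
  have hfun : (fun ξ : ℝ => ∫ v : ES m, Real.cos (ξ * v 0) * rexp (-t * ‖v‖ ^ 2))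
      = fun ξ : ℝ => K * rexp (-ξ^2/(4*t)) := funext fun ξ => cos_gauss m ht ξ
  rw [hfun] at hder
  have hinner : HasDerivAt (fun ξ : ℝ => -ξ^2/(4*t)) (-(2*x)/(4*t)) x := by
    have h1 : HasDerivAt (fun ξ : ℝ => -ξ^2) (-(2*x)) x := by
      simpa using (hasDerivAt_pow 2 x).fun_neg
    simpa using h1.div_const (4*t)
  have h2 : HasDerivAt (fun ξ : ℝ => K * rexp (-ξ^2/(4*t)))
      (K * (rexp (-x^2/(4*t)) * (-(2*x)/(4*t)))) x := by
    have := (hinner.exp).const_mul K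
    convert this using 1
    all_goals ring
  have huniq := hder.unique h2
  rw [integral_neg] at huniq
  have : ∫ v : ES m, (v 0) * Real.sin (x * v 0) * rexp (-t * ‖v‖ ^ 2)
      = -(K * (rexp (-x^2/(4*t)) * (-(2*x)/(4*t)))) := by linarith
  rw [this]; try ring

def Hx (m : ℕ) (α : ℝ) (ξ : ℝ) : ℝ := ∫ s : ES m, (s 0) * Real.sin (ξ * s 0) * w m α s

lemma pe_pos {m : ℕ} {α : ℝ} (hα : 0 < α) : 0 < pe m α := lt_trans one_pos (one_lt_pe hα)

lemma Hx_pos {m : ℕ} {α : ℝ} (hα : 0 < α) {x : ℝ} (hx : 0 < x) : 0 < Hx m α x := by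
  set p := pe m α with hpdef
  have hp : 1 < p := one_lt_pe hα
  have hppos : 0 < p := by linarith
  have hΓ : 0 < Real.Gamma p := Real.Gamma_pos_of_pos hppos
  set Fk : ES m → ℝ → ℝ :=
    fun s t => (s 0) * Real.sin (x * s 0) * (t ^ (p - 1) * rexp (-((1 + ‖s‖^2) * t)))
    with hFk
  have hq : (0:ℝ) < p - 1 := by linarith
  have hrc : Continuous fun t : ℝ => t ^ (p-1) := by
    rw [continuous_iff_continuousAt]; intro t
    exact Real.continuousAt_rpow_const _ _ (Or.inr hq.le)
  have hFcont : Continuous (Function.uncurry Fk) := by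
    apply Continuous.mul
    · exact (cont0.comp continuous_fst).mul
        (Real.continuous_sin.comp (continuous_const.mul (cont0.comp continuous_fst)))
    · exact (hrc.comp continuous_snd).mul
        (Real.continuous_exp.comp (((continuous_const.add
          ((continuous_norm.comp continuous_fst).pow 2)).mul continuous_snd).neg))
  have hsin : ∀ s : ES m, |s 0 * Real.sin (x * s 0)| ≤ |s 0| := fun s => by
    rw [abs_mul]
    calc |s 0| * |Real.sin (x * s 0)| ≤ |s 0| * 1 :=
          mul_le_mul_of_nonneg_left (Real.abs_sin_le_one _) (abs_nonneg _)
      _ = |s 0| := mul_one _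
  have hwify : ∀ s : ES m, ((1:ℝ)/(1 + ‖s‖^2)) ^ p = w m α s := by
    intro s
    have hb : (0:ℝ) < 1 + ‖s‖^2 := by positivity
    rw [one_div, Real.inv_rpow hb.le, ← Real.rpow_neg hb.le, hpdef]
    rfl
  have hprod : Integrable (Function.uncurry Fk)
      ((volume : Measure (ES m)).prod (volume.restrict (Set.Ioi 0))) := by
    refine (integrable_prod_iff hFcont.aestronglyMeasurable).mpr ⟨?_, ?_⟩
    all_goals simp only [Function.uncurry_apply_pair]
    · refine ae_of_all _ fun s => ?_
      have hb : (0:ℝ) < 1 + ‖s‖^2 := by positivity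
      have base := integrableOn_rpow_mul_exp_neg_mul_rpow
        (p := 1) (s := p-1) (b := 1 + ‖s‖^2) (by linarith) one_pos hb
      simp only [Real.rpow_one] at base
      have base2 : IntegrableOn (fun t : ℝ => t ^ (p-1) * rexp (-((1 + ‖s‖^2) * t)))
          (Set.Ioi 0) := by
        refine base.congr_fun (fun t _ => by simp only [neg_mul]) measurableSet_Ioi
      exact (base2.const_mul ((s 0) * Real.sin (x * s 0)))
    · have hval : ∀ s : ES m, (∫ t in Set.Ioi 0, ‖Fk s t‖)
          = |s 0 * Real.sin (x * s 0)| * (w m α s * Real.Gamma p) := by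
        intro s
        have hb : (0:ℝ) < 1 + ‖s‖^2 := by positivity
        have h1 : ∀ t ∈ Set.Ioi (0:ℝ), ‖Fk s t‖
            = |s 0 * Real.sin (x * s 0)| * (t ^ (p-1) * rexp (-((1 + ‖s‖^2) * t))) := by
          intro t ht
          simp only [hFk]
          rw [norm_mul, Real.norm_eq_abs, Real.norm_eq_abs]
          rw [abs_of_nonneg (mul_nonneg (Real.rpow_nonneg (le_of_lt ht) _) (Real.exp_pos _).le)]
        rw [setIntegral_congr_fun measurableSet_Ioi h1, integral_const_mul,
          integral_rpow_mul_exp_neg_mul_Ioi hppos hb, hwify s]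
      rw [funext hval]
      refine ((w1_int (m := m) hα).const_mul (Real.Gamma p)).mono'
        ?_ (ae_of_all _ fun s => ?_)
      · apply Continuous.aestronglyMeasurable
        apply Continuous.mul
        · exact (cont0.mul (Real.continuous_sin.comp (continuous_const.mul cont0))).abs
        · exact w_cont.mul continuous_const
      · rw [norm_of_nonneg (mul_nonneg (abs_nonneg _) (mul_nonneg (w_nonneg s) hΓ.le))]
        calc |s 0 * Real.sin (x * s 0)| * (w m α s * Real.Gamma p)
            ≤ |s 0| * (w m α s * Real.Gamma p) :=
              mul_le_mul_of_nonneg_right (hsin s) (mul_nonneg (w_nonneg s) hΓ.le)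
          _ = Real.Gamma p * (|s 0| * w m α s) := by ring
  have swap := integral_integral_swap (f := Fk) hprod
  -- evaluate the left side
  have hleft : ∀ s : ES m, (∫ t in Set.Ioi 0, Fk s t)
      = ((s 0) * Real.sin (x * s 0) * w m α s) * Real.Gamma p := by
    intro s
    have hb : (0:ℝ) < 1 + ‖s‖^2 := by positivity
    simp only [hFk]
    rw [integral_const_mul, integral_rpow_mul_exp_neg_mul_Ioi hppos hb, hwify s]
    ring
  -- evaluate the right side integrand
  set g : ℝ → ℝ := fun t => (t ^ (p-1) * rexp (-t)) *
      ((π/t) ^ (((m:ℝ)+1)/2) * (x/(2*t)) * rexp (-x^2/(4*t))) with hg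
  have hright : ∀ t ∈ Set.Ioi (0:ℝ), (∫ s : ES m, Fk s t) = g t := by
    intro t ht
    have hsplit : ∀ s : ES m, Fk s t
        = (t ^ (p-1) * rexp (-t)) * ((s 0) * Real.sin (x * s 0) * rexp (-t * ‖s‖^2)) := by
      intro s
      simp only [hFk]
      have : rexp (-((1 + ‖s‖^2) * t)) = rexp (-t) * rexp (-t * ‖s‖^2) := by
        rw [← Real.exp_add]; ring_nf
      rw [this]; ring
    rw [funext hsplit, integral_const_mul, Psi_eq m ht x]
  -- combine
  have hkey : Hx m α x * Real.Gamma p = ∫ t in Set.Ioi 0, g t := by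
    have h1 : (∫ s : ES m, ∫ t in Set.Ioi 0, Fk s t) = Hx m α x * Real.Gamma p := by
      rw [funext hleft, integral_mul_const]; rfl
    have h2 : (∫ t in Set.Ioi 0, ∫ s : ES m, Fk s t) = ∫ t in Set.Ioi 0, g t :=
      setIntegral_congr_fun measurableSet_Ioi hright
    rw [← h1, ← h2]
    exact swap
  have hgpos : ∀ t ∈ Set.Ioi (0:ℝ), 0 < g t := by
    intro t ht
    have ht' : (0:ℝ) < t := ht
    rw [hg]
    have h1 : (0:ℝ) < t ^ (p-1) := Real.rpow_pos_of_pos ht' _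
    have h2 : (0:ℝ) < (π/t) ^ (((m:ℝ)+1)/2) := Real.rpow_pos_of_pos (by positivity) _
    positivity
  have hgint : Integrable g (volume.restrict (Set.Ioi 0)) := by
    have := hprod.integral_prod_right
    simp only [Function.uncurry_apply_pair] at this
    refine this.congr ?_
    exact (ae_restrict_iff' measurableSet_Ioi).mpr (ae_of_all _ fun t ht => hright t ht)
  have hpos : 0 < ∫ t in Set.Ioi 0, g t := by
    rw [integral_pos_iff_support_of_nonneg_ae
      ((ae_restrict_iff' measurableSet_Ioi).mpr (ae_of_all _ fun t ht => (hgpos t ht).le))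
      hgint]
    have hsub : Set.Ioi (0:ℝ) ⊆ Function.support g := fun t ht => (hgpos t ht).ne'
    rw [Measure.restrict_apply' measurableSet_Ioi,
      Set.inter_eq_self_of_subset_right hsub, Real.volume_Ioi]
    exact ENNReal.zero_lt_top
  nlinarith [hkey ▸ hpos]

def Phi (m : ℕ) (α : ℝ) (R : ℝ) : ℝ := ∫ s : ES m, (1 + Real.cos (2*R * s 0)) * w m α s

lemma Phi_hasDerivAt {m : ℕ} {α : ℝ} (hα : 0 < α) (R : ℝ) :
    HasDerivAt (Phi m α) (-2 * Hx m α (2*R)) R := by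
  have hcont : ∀ r : ℝ, Continuous fun s : ES m => (1 + Real.cos (2*r * s 0)) * w m α s := by
    intro r
    exact (continuous_const.add
      (Real.continuous_cos.comp (continuous_const.mul cont0))).mul w_cont
  have hder := (hasDerivAt_integral_of_dominated_loc_of_deriv_le
      (μ := (volume : Measure (ES m)))
      (F := fun (r : ℝ) (s : ES m) => (1 + Real.cos (2*r * s 0)) * w m α s)
      (F' := fun (r : ℝ) (s : ES m) => (-2) * ((s 0) * Real.sin (2*r * s 0) * w m α s))
      (bound := fun s : ES m => 2 * (|s 0| * w m α s))
      (x₀ := R) (Metric.ball_mem_nhds R one_pos)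
      (Eventually.of_forall fun r => (hcont r).aestronglyMeasurable)
      (((w_int hα).const_mul 2).mono' (hcont R).aestronglyMeasurable
        (ae_of_all _ fun s => by
          rw [norm_mul, norm_of_nonneg (w_nonneg s)]
          refine mul_le_mul_of_nonneg_right ?_ (w_nonneg s)
          rw [Real.norm_eq_abs]
          have := Real.neg_one_le_cos (2*R * s 0)
          have := Real.cos_le_one (2*R * s 0)
          rw [abs_le]; constructor <;> linarith))
      (by
        apply Continuous.aestronglyMeasurable
        exact continuous_const.mul
          ((cont0.mul (Real.continuous_sin.comp (continuous_const.mul cont0))).mul w_cont))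
      (ae_of_all _ fun s => by
        intro r _
        rw [norm_mul, norm_mul, norm_mul, Real.norm_eq_abs, Real.norm_eq_abs,
          Real.norm_eq_abs, norm_of_nonneg (w_nonneg s)]
        have h1 : |(-2 : ℝ)| = 2 := by norm_num
        rw [h1]
        refine mul_le_mul_of_nonneg_left ?_ (by norm_num)
        refine mul_le_mul_of_nonneg_right ?_ (w_nonneg s)
        calc |s 0| * |Real.sin (2*r * s 0)| ≤ |s 0| * 1 :=
              mul_le_mul_of_nonneg_left (Real.abs_sin_le_one _) (abs_nonneg _)
          _ = |s 0| := mul_one _)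
      ((w1_int hα).const_mul 2)
      (ae_of_all _ fun s => by
        intro r _
        have h1 : HasDerivAt (fun r : ℝ => 2*r*s 0) (2*s 0) r := by
          simpa using ((hasDerivAt_id r).const_mul 2).mul_const (s 0)
        have h2 := (Real.hasDerivAt_cos (2*r*s 0)).comp r h1
        have h3 := (h2.const_add 1).mul_const (w m α s)
        exact h3.congr_deriv (by ring))).2
  have : (∫ s : ES m, (-2) * ((s 0) * Real.sin (2*R * s 0) * w m α s))
      = -2 * Hx m α (2*R) := by
    rw [integral_const_mul]; rfl
  rw [this] at hder
  exact hder

lemma scale_eq {m : ℕ} {α : ℝ} (hα : 0 < α) {R : ℝ} (hR : 0 < R) :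
    2 * R ^ (1+α) * (∫ t : ES m, (1 + Real.cos (t 0)) / (‖t‖ ^ 2 + 4 * R ^ 2)
      ^ (((m:ℝ) + 2 + α) / 2)) = 2 ^ (-α) * Phi m α R := by
  have h2R : (0:ℝ) < 2*R := by linarith
  set q : ℝ := ((m:ℝ) + 2 + α) / 2 with hq
  have hcs := Measure.integral_comp_smul (volume : Measure (ES m))
    (fun t : ES m => (1 + Real.cos (t 0)) / (‖t‖ ^ 2 + 4 * R ^ 2) ^ q) (2*R)
  have hpt : ∀ s : ES m, (fun t : ES m => (1 + Real.cos (t 0)) / (‖t‖ ^ 2 + 4 * R ^ 2) ^ q)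
      ((2*R) • s)
      = (((2*R)^2) ^ q)⁻¹ * ((1 + Real.cos (2*R * s 0)) * w m α s) := by
    intro s
    have hs0 : ((2*R) • s) 0 = 2*R * s 0 := rfl
    have hnrm : ‖(2*R) • s‖ ^ 2 + 4*R^2 = (2*R)^2 * (1 + ‖s‖^2) := by
      rw [norm_smul, Real.norm_eq_abs, abs_of_pos h2R]; ring
    simp only [hs0, hnrm]
    rw [Real.mul_rpow (by positivity) (by positivity)]
    have hw : w m α s = ((1 + ‖s‖^2) ^ q)⁻¹ := by
      rw [show w m α s = (1 + ‖s‖^2) ^ (-(pe m α)) from rfl,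
        Real.rpow_neg (by positivity)]
      rfl
    rw [hw, div_eq_mul_inv, mul_inv]
    ring
  rw [funext hpt, integral_const_mul, finrank_euclideanSpace_fin, smul_eq_mul] at hcs
  have habs : |((2*R : ℝ) ^ (m+1))⁻¹| = ((2*R) ^ (m+1))⁻¹ :=
    abs_of_pos (by positivity)
  rw [habs] at hcs
  -- B = (2R)^(m+1) * (((2R)^2)^q)⁻¹ * Phi
  have hBpos : (0:ℝ) < (2*R) ^ (m+1) := by positivity
  have hB : (∫ t : ES m, (1 + Real.cos (t 0)) / (‖t‖ ^ 2 + 4 * R ^ 2) ^ q)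
      = (2*R) ^ (m+1) * ((((2*R)^2) ^ q)⁻¹ * Phi m α R) := by
    have h5 := hcs.symm
    rw [inv_mul_eq_iff_eq_mul₀ hBpos.ne'] at h5
    rw [h5]
    rfl
  rw [hB]
  -- coefficient algebra
  have e1 : (((2*R) : ℝ)^2) ^ q = (2*R) ^ ((m:ℝ)+1) * (2*R) ^ (1+α) := by
    rw [← Real.rpow_natCast (2*R) 2, ← Real.rpow_mul h2R.le, ← Real.rpow_add h2R]
    congr 1
    push_cast
    rw [hq]; ring
  have e2 : ((2*R) : ℝ) ^ (m+1) = (2*R) ^ ((m:ℝ)+1) := by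
    rw [← Real.rpow_natCast (2*R) (m+1)]
    congr 1
    push_cast; ring
  rw [e1, e2, mul_inv]
  have e3 : ((2*R) : ℝ) ^ (1+α) = 2 ^ (1+α) * R ^ (1+α) :=
    Real.mul_rpow (by norm_num) hR.le
  have e4 : (2:ℝ) ^ (-α) * 2 ^ (1+α) = 2 := by
    rw [← Real.rpow_add (by norm_num)]
    norm_num
  rw [e3]
  have hRp : (0:ℝ) < R ^ (1+α) := Real.rpow_pos_of_pos hR _
  have h2p : (0:ℝ) < (2:ℝ) ^ (1+α) := Real.rpow_pos_of_pos (by norm_num) _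
  have hX : (0:ℝ) < (2*R) ^ ((m:ℝ)+1) := Real.rpow_pos_of_pos h2R _
  field_simp
  linear_combination (-Phi m α R) * e4

end Stmt8

/-- `ν` is differentiable on `(0,∞)` with `ν'(R) > 0` for every `R > 0`;
in particular `ν` is strictly increasing on `(0,∞)`.  Here `N = m + 2 ≥ 2`. -/
theorem statement_8 (m : ℕ) (α : ℝ) (hα : α ∈ Set.Ioo (0 : ℝ) 1) :
    (∀ R : ℝ, 0 < R → ∃ d : ℝ, HasDerivAt (nu m α) d R ∧ 0 < d) ∧
      StrictMonoOn (nu m α) (Set.Ioi 0) := by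
  obtain ⟨hα0, _⟩ := hα
  set A : ℝ := ∫ t : ES m, (1 - Real.cos (t 0)) / ‖t‖ ^ ((m : ℝ) + 2 + α) with hA
  have hAnn : 0 ≤ A :=
    integral_nonneg fun t => div_nonneg
      (by nlinarith [Real.cos_le_one (t 0)]) (Real.rpow_nonneg (norm_nonneg t) _)
  have key : ∀ R : ℝ, 0 < R →
      HasDerivAt (nu m α)
        (2 * ((1+α) * R^α) * A + 2^(-α) * (2 * Stmt8.Hx m α (2*R))) R ∧
      0 < 2 * ((1+α) * R^α) * A + 2^(-α) * (2 * Stmt8.Hx m α (2*R)) := by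
    intro R hR
    constructor
    · have hev : (fun r => 2 * r ^ (1+α) * A - 2^(-α) * Stmt8.Phi m α r) =ᶠ[𝓝 R] nu m α := by
        filter_upwards [isOpen_Ioi.mem_nhds (show R ∈ Set.Ioi 0 from hR)] with r hr
        rw [show nu m α r = 2 * r ^ (1+α) *
            (A - ∫ t : ES m, (1 + Real.cos (t 0)) /
              (‖t‖ ^ 2 + 4 * r ^ 2) ^ (((m : ℝ) + 2 + α) / 2)) from rfl,
          mul_sub, Stmt8.scale_eq hα0 hr]
      have hd1 : HasDerivAt (fun r : ℝ => 2 * r ^ (1+α) * A) (2 * ((1+α) * R^α) * A) R := by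
        have h0 := Real.hasDerivAt_rpow_const (x := R) (p := 1+α) (Or.inl hR.ne')
        have h1 := (h0.const_mul 2).mul_const A
        simpa [show (1:ℝ)+α-1 = α by ring] using h1
      have hd2 := (Stmt8.Phi_hasDerivAt (m := m) hα0 R).const_mul ((2:ℝ)^(-α))
      have hd := hd1.sub hd2
      have hval : 2 * ((1+α) * R^α) * A - 2^(-α) * (-2 * Stmt8.Hx m α (2*R))
          = 2 * ((1+α) * R^α) * A + 2^(-α) * (2 * Stmt8.Hx m α (2*R)) := by ring
      rw [hval] at hd
      exact hd.congr_of_eventuallyEq hev.symm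
    · have hH := Stmt8.Hx_pos (m := m) hα0 (show (0:ℝ) < 2*R by linarith)
      have h1 : 0 < (2:ℝ)^(-α) := Real.rpow_pos_of_pos two_pos _
      have h2 : 0 < R^α := Real.rpow_pos_of_pos hR _
      have h1α : (0:ℝ) < 1 + α := by linarith
      have h3 : 0 ≤ 2 * ((1+α) * R^α) * A :=
        mul_nonneg (mul_nonneg (by norm_num) (mul_nonneg h1α.le h2.le)) hAnn
      have h4 : 0 < 2^(-α) * (2 * Stmt8.Hx m α (2*R)) :=
        mul_pos h1 (by linarith)
      linarith
  refine ⟨fun R hR => ⟨_, (key R hR).1, (key R hR).2⟩, ?_⟩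
  refine strictMonoOn_of_deriv_pos (convex_Ioi 0) ?_ ?_
  · intro x hx
    exact ((key x hx).1).continuousAt.continuousWithinAt
  · intro x hx
    rw [interior_Ioi] at hx
    rw [((key x hx).1).deriv]
    exact (key x hx).2
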